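/- Let E, A ∈ ℂ^{n×n}, B ∈ ℂ^{n×m}, C ∈ ℂ^{m×n}, K ∈ ℂ^{m×m}. If the pair (E, A − BKC) is regular and impulse-free, then rank([[E, A],[0, E],[0, C]]) = n + rank(E). -/

import Mathlib

open Matrix Polynomial


lemma aux_natDegree_det_le {N : Type*} [Fintype N] [DecidableEq N]
    (A : Matrix N N (Polynomial ℂ)) (d : N → ℕ) (h : ∀ i j, (A i j).natDegree ≤ d j) :
    (A.det).natDegree ≤ ∑ j, d j := by
  rw [Matrix.det_apply']
  refine Polynomial.natDegree_sum_le_of_forall_le _ _ (fun σ _ => ?_)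
  refine Polynomial.natDegree_mul_le.trans ?_
  have h1 : (Equiv.Perm.sign σ : Polynomial ℂ).natDegree = 0 := by
    rcases Int.units_eq_one_or (Equiv.Perm.sign σ) with hs | hs <;> simp [hs]
  rw [h1, zero_add]
  exact Polynomial.natDegree_prod_le _ _ |>.trans
    (Finset.sum_le_sum (fun i _ => h (σ i) i))


lemma aux_rank_factor {k : ℕ} (P : Matrix (Fin k) (Fin k) ℂ) :
    ∃ (F : Matrix (Fin k) (Fin P.rank) ℂ) (G : Matrix (Fin P.rank) (Fin k) ℂ), P = F * G := by
  have hmem : ∀ l : Fin k, (fun i => P i l) ∈ LinearMap.range P.mulVecLin := by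
    intro l
    exact ⟨Pi.single l 1, by simp [Matrix.mulVecLin_apply, Matrix.mulVec_single]; rfl⟩
  let b : Module.Basis (Fin P.rank) ℂ (LinearMap.range P.mulVecLin) :=
    Module.finBasisOfFinrankEq ℂ _ rfl
  refine ⟨fun i j => (b j : Fin k → ℂ) i, fun j l => b.repr ⟨_, hmem l⟩ j, ?_⟩
  ext i l
  have := b.sum_repr ⟨_, hmem l⟩
  have h2 := congrFun (congrArg Subtype.val this) i
  simp only [Submodule.coe_sum, Submodule.coe_smul, Finset.sum_apply, Pi.smul_apply,
    smul_eq_mul] at h2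
  change P i l = ∑ j, (b j : Fin k → ℂ) i * b.repr ⟨_, hmem l⟩ j
  rw [← h2]
  exact Finset.sum_congr rfl (fun j _ => mul_comm _ _)

lemma aux_pencil_deg {k : ℕ} (P Q : Matrix (Fin k) (Fin k) ℂ) :
    (((X : Polynomial ℂ) • P.map Polynomial.C - Q.map Polynomial.C).det).natDegree ≤ P.rank := by
  obtain ⟨F, G, hFG⟩ := aux_rank_factor P
  have h0 : (X : Polynomial ℂ) • P.map Polynomial.C - Q.map Polynomial.C =
      (X : Polynomial ℂ) • (F * G).map Polynomial.C - Q.map Polynomial.C := by rw [← hFG]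
  have key : (X : Polynomial ℂ) • (F * G).map Polynomial.C - Q.map Polynomial.C =
      (-1 : Polynomial ℂ) • (Q.map Polynomial.C -
        ((X : Polynomial ℂ) • F.map Polynomial.C) * G.map Polynomial.C) := by
    rw [Matrix.map_mul, Matrix.smul_mul]
    ext i j
    simp [Matrix.sub_apply]
  rw [h0, key, Matrix.det_smul]
  refine Polynomial.natDegree_mul_le.trans ?_
  have hn0 : ((-1 : Polynomial ℂ) ^ Fintype.card (Fin k)).natDegree = 0 := by
    simp [Polynomial.natDegree_pow]
  rw [hn0, zero_add]
  rw [← Matrix.det_fromBlocks_one₁₁ (G.map Polynomial.C)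
    ((X : Polynomial ℂ) • F.map Polynomial.C) (Q.map Polynomial.C)]
  have hle := aux_natDegree_det_le
    (Matrix.fromBlocks 1 (G.map Polynomial.C)
      ((X : Polynomial ℂ) • F.map Polynomial.C) (Q.map Polynomial.C))
    (Sum.elim (fun _ : Fin P.rank => 1) (fun _ : Fin k => 0)) ?_
  · refine hle.trans ?_
    simp [Fintype.sum_sum_type]
  · rintro (i | i) (j | j) <;>
      simp only [Matrix.fromBlocks_apply₁₁, Matrix.fromBlocks_apply₁₂,
        Matrix.fromBlocks_apply₂₁, Matrix.fromBlocks_apply₂₂, Sum.elim_inl, Sum.elim_inr,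
        Matrix.map_apply, Matrix.smul_apply, smul_eq_mul, Matrix.one_apply]
    · split <;> simp
    · simp
    · exact Polynomial.natDegree_mul_le.trans (by simp)
    · simp

lemma aux_W {k : ℕ} (E M : Matrix (Fin k) (Fin k) ℂ)
    (hreg : ((X : Polynomial ℂ) • E.map Polynomial.C - M.map Polynomial.C).det ≠ 0)
    (himp : (((X : Polynomial ℂ) • E.map Polynomial.C - M.map Polynomial.C).det).natDegree
      = E.rank)
    (a v : Fin k → ℂ) (ha : a ᵥ* E = 0) (hav : a ᵥ* M = v ᵥ* E) : a = 0 := by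
  by_contra hne
  obtain ⟨i, hi⟩ : ∃ i, a i ≠ 0 := Function.ne_iff.mp hne
  set P : Matrix (Fin k) (Fin k) (Polynomial ℂ) :=
    (X : Polynomial ℂ) • E.map Polynomial.C - M.map Polynomial.C with hP
  set u : Fin k → Polynomial ℂ := fun j => Polynomial.C (a j) * X + Polynomial.C (v j) with hu
  -- the linear combination of the rows of P with coefficients u is constant
  have key : ∑ j, u j • P j = fun ℓ => - Polynomial.C ((v ᵥ* M) ℓ) := by
    funext ℓ
    have expand : ∀ j, (u j • P j) ℓ =
        Polynomial.C (a j * E j ℓ) * X ^ 2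
          + Polynomial.C (v j * E j ℓ - a j * M j ℓ) * X
          - Polynomial.C (v j * M j ℓ) := by
      intro j
      simp only [hu, hP, Pi.smul_apply, smul_eq_mul, Matrix.sub_apply, Matrix.smul_apply,
        Matrix.map_apply, smul_eq_mul, _root_.map_mul, map_sub, map_add]
      ring
    rw [Finset.sum_apply]
    simp only [expand]
    rw [Finset.sum_sub_distrib, Finset.sum_add_distrib, ← Finset.sum_mul, ← Finset.sum_mul,
      ← map_sum, ← map_sum, ← map_sum]
    have e1 : ∑ j, a j * E j ℓ = (a ᵥ* E) ℓ := rfl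
    have e2 : ∑ j, (v j * E j ℓ - a j * M j ℓ) = (v ᵥ* E) ℓ - (a ᵥ* M) ℓ := by
      rw [Finset.sum_sub_distrib]; rfl
    have e3 : ∑ j, v j * M j ℓ = (v ᵥ* M) ℓ := rfl
    rw [e1, e2, e3, ha, hav, sub_self]
    simp
  have hdet : (P.updateRow i (fun ℓ => - Polynomial.C ((v ᵥ* M) ℓ))).det = u i * P.det := by
    rw [← key, Matrix.det_updateRow_sum, smul_eq_mul]
  -- the updated matrix is a pencil with rank-bounded leading matrix
  have hform : P.updateRow i (fun ℓ => - Polynomial.C ((v ᵥ* M) ℓ)) =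
      (X : Polynomial ℂ) • (E.updateRow i 0).map Polynomial.C -
        (M.updateRow i (v ᵥ* M)).map Polynomial.C := by
    ext j ℓ
    rcases eq_or_ne j i with rfl | hj
    · simp [Matrix.updateRow_self, Matrix.sub_apply]
    · simp [Matrix.updateRow_ne hj, hP, Matrix.sub_apply]
  have hrank : (E.updateRow i 0).rank ≤ E.rank := by
    have hfac : E.updateRow i 0 =
        (Matrix.diagonal (fun j => if j = i then (0 : ℂ) else 1)) * E := by
      ext j ℓ
      rw [Matrix.diagonal_mul]
      rcases eq_or_ne j i with rfl | hj
      · simp [Matrix.updateRow_self]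
      · simp [Matrix.updateRow_ne hj, hj]
    rw [hfac]
    exact Matrix.rank_mul_le_right _ _
  have hle : ((P.updateRow i (fun ℓ => - Polynomial.C ((v ᵥ* M) ℓ))).det).natDegree ≤ E.rank :=
    by rw [hform]; exact (aux_pencil_deg _ _).trans hrank
  have hui : (u i).natDegree = 1 := Polynomial.natDegree_linear hi
  have hune : u i ≠ 0 := fun h => by simp [h] at hui
  rw [hdet, Polynomial.natDegree_mul hune hreg, hui, himp] at hle
  omega

lemma aux_rank_T {k : ℕ} (E M : Matrix (Fin k) (Fin k) ℂ)
    (hW : ∀ a v : Fin k → ℂ, a ᵥ* E = 0 → a ᵥ* M = v ᵥ* E → a = 0) :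
    (Matrix.fromBlocks E M 0 E).rank = k + E.rank := by
  rw [← Matrix.rank_transpose, Matrix.fromBlocks_transpose, Matrix.transpose_zero]
  set S : Matrix (Fin k ⊕ Fin k) (Fin k ⊕ Fin k) ℂ := Matrix.fromBlocks Eᵀ 0 Mᵀ Eᵀ with hS
  -- the linear map sending c to Sum.elim 0 c
  let φ : (Fin k → ℂ) →ₗ[ℂ] (Fin k ⊕ Fin k → ℂ) :=
    { toFun := fun c => Sum.elim 0 c
      map_add' := by intro x y; funext s; cases s <;> simp
      map_smul' := by intro r x; funext s; cases s <;> simp }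
  have hinj : Function.Injective φ := by
    intro x y h
    funext j
    exact congrFun h (Sum.inr j)
  have hker : LinearMap.ker S.mulVecLin =
      Submodule.map φ (LinearMap.ker Eᵀ.mulVecLin) := by
    ext x
    simp only [LinearMap.mem_ker, Matrix.mulVecLin_apply, Submodule.mem_map]
    constructor
    · intro hx
      have hx' : S *ᵥ Sum.elim (x ∘ Sum.inl) (x ∘ Sum.inr) = 0 := by
        rw [Sum.elim_comp_inl_inr]; exact hx
      rw [hS, Matrix.fromBlocks_mulVec] at hx'
      have ha : (x ∘ Sum.inl) ᵥ* E = 0 := by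
        rw [← Matrix.mulVec_transpose]
        funext j
        simpa using congrFun hx' (Sum.inl j)
      have hc2 : Mᵀ *ᵥ (x ∘ Sum.inl) + Eᵀ *ᵥ (x ∘ Sum.inr) = 0 := by
        funext j
        simpa using congrFun hx' (Sum.inr j)
      have ha0 : (x ∘ Sum.inl) = 0 := by
        refine hW _ (-(x ∘ Sum.inr)) ha ?_
        rw [← Matrix.mulVec_transpose, ← Matrix.mulVec_transpose, eq_comm, Matrix.mulVec_neg,
          neg_eq_iff_add_eq_zero, add_comm]
        exact hc2
      refine ⟨x ∘ Sum.inr, ?_, ?_⟩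
      · rw [← Matrix.mulVecLin_apply] at hc2
        have : Mᵀ *ᵥ (x ∘ Sum.inl) = 0 := by rw [ha0, Matrix.mulVec_zero]
        rw [Matrix.mulVecLin_apply] at hc2
        rw [this, zero_add] at hc2
        exact hc2
      · funext s
        cases s with
        | inl j => exact (congrFun ha0 j).symm
        | inr j => rfl
    · rintro ⟨c, hc, rfl⟩
      show S *ᵥ Sum.elim 0 c = 0
      rw [hS, Matrix.fromBlocks_mulVec]
      funext s
      cases s <;> simp [hc]
  have hfr : Module.finrank ℂ (LinearMap.ker S.mulVecLin) =
      Module.finrank ℂ (LinearMap.ker Eᵀ.mulVecLin) := by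
    rw [hker]
    exact (Submodule.equivMapOfInjective φ hinj _).finrank_eq.symm
  have r1 := LinearMap.finrank_range_add_finrank_ker S.mulVecLin
  have r2 := LinearMap.finrank_range_add_finrank_ker Eᵀ.mulVecLin
  rw [Module.finrank_fintype_fun_eq_card] at r1 r2
  simp only [Fintype.card_sum, Fintype.card_fin] at r1 r2
  have hrS : S.rank = Module.finrank ℂ (LinearMap.range S.mulVecLin) := rfl
  have hrE : Eᵀ.rank = Module.finrank ℂ (LinearMap.range Eᵀ.mulVecLin) := rfl
  have hrEE : Eᵀ.rank = E.rank := Matrix.rank_transpose E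
  omega


lemma aux_rank_fromCols_le {m₁ n₁ n₂ : Type*} [Fintype m₁] [Fintype n₁] [Fintype n₂]
    (A : Matrix m₁ n₁ ℂ) (B : Matrix m₁ n₂ ℂ) :
    (Matrix.fromCols A B).rank ≤ A.rank + B.rank := by
  have hle : LinearMap.range (Matrix.fromCols A B).mulVecLin ≤
      LinearMap.range A.mulVecLin ⊔ LinearMap.range B.mulVecLin := by
    rintro v ⟨w, rfl⟩
    have hw : w = Sum.elim (w ∘ Sum.inl) (w ∘ Sum.inr) := by
      funext s; cases s <;> rfl
    rw [Matrix.mulVecLin_apply, hw, Matrix.fromCols_mulVec_sumElim]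
    exact Submodule.add_mem_sup ⟨_, rfl⟩ ⟨_, rfl⟩
  calc (Matrix.fromCols A B).rank
      ≤ Module.finrank ℂ ↥(LinearMap.range A.mulVecLin ⊔ LinearMap.range B.mulVecLin) :=
        Submodule.finrank_mono hle
    _ ≤ A.rank + B.rank := by
        have := Submodule.finrank_sup_add_finrank_inf_eq
          (LinearMap.range A.mulVecLin) (LinearMap.range B.mulVecLin)
        have h0 : A.rank = Module.finrank ℂ (LinearMap.range A.mulVecLin) := rfl
        have h1 : B.rank = Module.finrank ℂ (LinearMap.range B.mulVecLin) := rfl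
        omega

lemma aux_rank_fromRows_le {m₁ m₂ n₁ : Type*} [Fintype m₁] [Fintype m₂] [Fintype n₁]
    (A : Matrix m₁ n₁ ℂ) (B : Matrix m₂ n₁ ℂ) :
    (Matrix.fromRows A B).rank ≤ A.rank + B.rank := by
  rw [← Matrix.rank_transpose, Matrix.transpose_fromRows, ← Matrix.rank_transpose A,
    ← Matrix.rank_transpose B]
  exact aux_rank_fromCols_le _ _

/-- If the pair (E, A − BKC) is regular and impulse-free, then
rank [[E, A],[0, E],[0, C]] = n + rank E. -/
theorem stmt_18 {n m : ℕ}
    (E A : Matrix (Fin n) (Fin n) ℂ)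
    (B : Matrix (Fin n) (Fin m) ℂ) (C : Matrix (Fin m) (Fin n) ℂ)
    (K : Matrix (Fin m) (Fin m) ℂ)
    (hreg : Matrix.det ((Polynomial.X : Polynomial ℂ) • E.map Polynomial.C -
        (A - B * K * C).map Polynomial.C) ≠ 0)
    (himp : (Matrix.det ((Polynomial.X : Polynomial ℂ) • E.map Polynomial.C -
        (A - B * K * C).map Polynomial.C)).natDegree = E.rank) :
    (Matrix.fromRows (Matrix.fromBlocks E A 0 E)
        (Matrix.fromCols (0 : Matrix (Fin m) (Fin n) ℂ) C)).rank = n + E.rank := by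
  set M : Matrix (Fin n) (Fin n) ℂ := A - B * K * C with hM
  set R := Matrix.fromRows (Matrix.fromBlocks E A 0 E)
      (Matrix.fromCols (0 : Matrix (Fin m) (Fin n) ℂ) C) with hR
  -- lower bound
  have hT : Matrix.fromBlocks E M 0 E =
      (Matrix.fromCols (1 : Matrix (Fin n ⊕ Fin n) (Fin n ⊕ Fin n) ℂ)
        (Matrix.fromRows (-(B * K)) (0 : Matrix (Fin n) (Fin m) ℂ))) * R := by
    rw [hR, Matrix.fromCols_mul_fromRows, Matrix.one_mul, Matrix.fromRows_mul,
      Matrix.mul_fromCols, Matrix.mul_fromCols]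
    ext (i | i) (j | j) <;>
      simp [hM, Matrix.mul_assoc,
        Matrix.mul_apply, Matrix.sub_apply, Finset.sum_sub_distrib, sub_eq_add_neg]
  have hlow : n + E.rank ≤ R.rank := by
    have h1 : (Matrix.fromBlocks E M 0 E).rank = n + E.rank := by
      refine aux_rank_T E M (fun a v ha hav => aux_W E M ?_ ?_ a v ha hav)
      · exact hreg
      · exact himp
    rw [← h1, hT]
    exact Matrix.rank_mul_le_right _ _
  -- upper bound
  have hsplit : R = Matrix.fromCols
      (Matrix.fromRows (Matrix.fromRows E (0 : Matrix (Fin n) (Fin n) ℂ))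
        (0 : Matrix (Fin m) (Fin n) ℂ))
      (Matrix.fromRows (Matrix.fromRows A E) C) := by
    rw [hR]
    ext (i | i) j
    · rcases i with i | i <;> rcases j with j | j <;>
        simp
    · rcases j with j | j <;> simp
  have hup : R.rank ≤ n + E.rank := by
    rw [hsplit]
    refine (aux_rank_fromCols_le _ _).trans ?_
    have h1 : (Matrix.fromRows (Matrix.fromRows E (0 : Matrix (Fin n) (Fin n) ℂ))
        (0 : Matrix (Fin m) (Fin n) ℂ)).rank ≤ E.rank := by
      refine (aux_rank_fromRows_le _ _).trans ?_
      have := aux_rank_fromRows_le E (0 : Matrix (Fin n) (Fin n) ℂ)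
      simp only [Matrix.rank_zero] at this ⊢
      omega
    have h2 : (Matrix.fromRows (Matrix.fromRows A E) C).rank ≤ n := by
      simpa using Matrix.rank_le_card_width (Matrix.fromRows (Matrix.fromRows A E) C)
    omega
  omega
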